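/- Let n ≥ 1 and let G and H be finite subgroups of GL(n, ℝ) acting on ℝⁿ by matrix–vector multiplication. Let f, g : ℝⁿ → ℝⁿ be continuously differentiable maps such that for every x ∈ ℝⁿ there exists γ ∈ G with g(f(x)) = γ·x, and for every y ∈ ℝⁿ there exists μ ∈ H with f(g(y)) = μ·y. Then the differential Df(x) is invertible for every x ∈ ℝⁿ and the differential Dg(y) is invertible for every y ∈ ℝⁿ; i.e., f and g are local diffeomorphisms. -/

import Mathlib

lemma aux_lift (n : ℕ) (G : Subgroup (GL (Fin n) ℝ)) [Finite G]
    (h : (Fin n → ℝ) → (Fin n → ℝ)) (hh : ContDiff ℝ 1 h)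
    (hlift : ∀ x : Fin n → ℝ, ∃ γ ∈ G,
      h x = Matrix.mulVec ((γ : GL (Fin n) ℝ) : Matrix (Fin n) (Fin n) ℝ) x) :
    ∀ x, Function.Bijective (fderiv ℝ h x) := by
  classical
  set A : G → (Fin n → ℝ) →L[ℝ] (Fin n → ℝ) := fun γ =>
    LinearMap.toContinuousLinearMap
      (Matrix.mulVecLin ((γ : GL (Fin n) ℝ) : Matrix (Fin n) (Fin n) ℝ)) with hA
  have hAval : ∀ (γ : G) (x), A γ x =
      Matrix.mulVec ((γ : GL (Fin n) ℝ) : Matrix (Fin n) (Fin n) ℝ) x := fun γ x => rfl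
  set S : G → Set (Fin n → ℝ) := fun γ => {x | h x = A γ x} with hS
  have hSclosed : ∀ γ, IsClosed (S γ) :=
    fun γ => isClosed_eq hh.continuous (A γ).continuous
  have hScover : (⋃ γ, S γ) = Set.univ := by
    ext x
    simp only [Set.mem_iUnion, Set.mem_univ, iff_true]
    obtain ⟨γ, hγ, hx⟩ := hlift x
    exact ⟨⟨γ, hγ⟩, hx⟩
  have hdense : Dense (⋃ γ, interior (S γ)) :=
    dense_iUnion_interior_of_closed hSclosed hScover
  set C : Set (Fin n → ℝ) := {x | ∃ γ : G, fderiv ℝ h x = A γ} with hC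
  have hCclosed : IsClosed C := by
    have : C = ⋃ γ : G, (fun x => fderiv ℝ h x) ⁻¹' {A γ} := by
      ext x; simp [hC, Set.mem_iUnion, eq_comm]
    rw [this]
    exact isClosed_iUnion_of_finite fun γ =>
      (isClosed_singleton).preimage (hh.continuous_fderiv one_ne_zero)
  have hsub : (⋃ γ, interior (S γ)) ⊆ C := by
    rintro x hx
    simp only [Set.mem_iUnion] at hx
    obtain ⟨γ, hx⟩ := hx
    refine ⟨γ, ?_⟩
    have heq : h =ᶠ[nhds x] (A γ) := by
      filter_upwards [IsOpen.mem_nhds isOpen_interior hx] with y hy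
      exact (interior_subset hy : y ∈ S γ)
    rw [heq.fderiv_eq, (A γ).fderiv]
  have hCuniv : ∀ x, x ∈ C := by
    intro x
    have : closure (⋃ γ, interior (S γ)) ⊆ C := by
      rw [← hCclosed.closure_eq]; exact closure_mono hsub
    exact this (hdense x)
  intro x
  obtain ⟨γ, hγ⟩ := hCuniv x
  rw [hγ]
  have hinvmul : (↑(γ : GL (Fin n) ℝ)⁻¹ : Matrix (Fin n) (Fin n) ℝ) *
      ((γ : GL (Fin n) ℝ) : Matrix (Fin n) (Fin n) ℝ) = 1 := Units.inv_mul _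
  have hmulinv : ((γ : GL (Fin n) ℝ) : Matrix (Fin n) (Fin n) ℝ) *
      (↑(γ : GL (Fin n) ℝ)⁻¹ : Matrix (Fin n) (Fin n) ℝ) = 1 := Units.mul_inv _
  simp only [Matrix.coe_units_inv] at hinvmul hmulinv
  constructor
  · intro a b hab
    simp only [hAval] at hab
    have := congrArg (Matrix.mulVec ((↑(γ : GL (Fin n) ℝ)⁻¹ : Matrix (Fin n) (Fin n) ℝ))) hab
    simpa [Matrix.mulVec_mulVec, hinvmul, Matrix.one_mulVec] using this
  · intro b
    refine ⟨Matrix.mulVec ((↑(γ : GL (Fin n) ℝ)⁻¹ : Matrix (Fin n) (Fin n) ℝ)) b, ?_⟩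
    simp [hAval, Matrix.mulVec_mulVec, hmulinv, Matrix.one_mulVec]

/-- (Lemma 2.2 in linear charts.) If the C¹ maps f and g compose, in both
orders, to lifts of the identity of the quotients ℝⁿ/G and ℝⁿ/H, then f and g are local
diffeomorphisms: all their differentials are invertible. -/
theorem lifts_of_orbifold_diffeomorphism_are_local_diffeomorphisms
    (n : ℕ) (hn : 1 ≤ n) (G H : Subgroup (GL (Fin n) ℝ)) [Finite G] [Finite H]
    (f g : (Fin n → ℝ) → (Fin n → ℝ))
    (hf : ContDiff ℝ 1 f) (hg : ContDiff ℝ 1 g)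
    (hgf : ∀ x : Fin n → ℝ, ∃ γ ∈ G,
      g (f x) = Matrix.mulVec ((γ : GL (Fin n) ℝ) : Matrix (Fin n) (Fin n) ℝ) x)
    (hfg : ∀ y : Fin n → ℝ, ∃ μ ∈ H,
      f (g y) = Matrix.mulVec ((μ : GL (Fin n) ℝ) : Matrix (Fin n) (Fin n) ℝ) y) :
    (∀ x : Fin n → ℝ, Function.Bijective (fderiv ℝ f x)) ∧
    (∀ y : Fin n → ℝ, Function.Bijective (fderiv ℝ g y)) := by
  have hdf : Differentiable ℝ f := hf.differentiable one_ne_zero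
  have hdg : Differentiable ℝ g := hg.differentiable one_ne_zero
  have h1 : ∀ x, Function.Bijective (fderiv ℝ (g ∘ f) x) :=
    aux_lift n G (g ∘ f) (hg.comp hf) hgf
  have h2 : ∀ y, Function.Bijective (fderiv ℝ (f ∘ g) y) :=
    aux_lift n H (f ∘ g) (hf.comp hg) hfg
  have key : ∀ (u : (Fin n → ℝ) → (Fin n → ℝ)) (hu : Differentiable ℝ u) (x),
      Function.Injective (fderiv ℝ u x) → Function.Bijective (fderiv ℝ u x) := by
    intro u hu x hinj
    refine ⟨hinj, ?_⟩
    exact (LinearMap.injective_iff_surjective (f := (fderiv ℝ u x : (Fin n → ℝ) →ₗ[ℝ] _))).mp hinj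
  constructor
  · intro x
    have hcomp : fderiv ℝ (g ∘ f) x = (fderiv ℝ g (f x)).comp (fderiv ℝ f x) :=
      fderiv_comp x (hdg (f x)) (hdf x)
    refine key f hdf x ?_
    intro a b hab
    have : (fderiv ℝ (g ∘ f) x) a = (fderiv ℝ (g ∘ f) x) b := by
      rw [hcomp]; simp [hab]
    exact (h1 x).injective this
  · intro y
    have hcomp : fderiv ℝ (f ∘ g) y = (fderiv ℝ f (g y)).comp (fderiv ℝ g y) :=
      fderiv_comp y (hdf (g y)) (hdg y)
    refine key g hdg y ?_
    intro a b hab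
    have : (fderiv ℝ (f ∘ g) y) a = (fderiv ℝ (f ∘ g) y) b := by
      rw [hcomp]; simp [hab]
    exact (h2 y).injective this
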